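/- Let N be an α,β-net in a finite-dimensional normed space X, {φ_i} a commuting retraction system on N with sup Lip(φ_i) = K, and suppose μ_m ∈ N with ‖μ_m‖ > Kβn satisfies φ_m(t) = μ_m for all t in some set A ⊆ N. Then every chain T from μ_m to a point t ∈ A avoids the ball B(0, βn): i.e., every point μ_p ∈ T satisfies ‖μ_p‖ > βn. -/

import Mathlib

open scoped NNReal

/-- Two indices `a < b` are consecutive in a chain when `φ (b-1) (μ b) = μ a`. -/
def chainRel {X : Type*} (φ : ℕ → X → X) (μ : ℕ → X) (a b : ℕ) : Prop :=
  a < b ∧ φ (b - 1) (μ b) = μ a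

/-- A chain is a finite sequence of indices, consecutive ones related by `chainRel`. -/
def IsChainSeq {X : Type*} (φ : ℕ → X → X) (μ : ℕ → X) (S : List ℕ) : Prop :=
  S.Chain' (chainRel φ μ)

/-- if `‖μ m‖ > Kβn` and `φ m t = μ m` for all `t` in a set `A`, then
every chain from `μ m` to a point of `A` avoids the ball `B(0, βn)`: each of its
points `μ p` satisfies `‖μ p‖ > βn`. -/
theorem chain_avoids_ball {X : Type*} [NormedAddCommGroup X] [NormedSpace ℝ X]
    (β : ℝ) (hβ : 0 < β) (n : ℕ)
    (N : Set X) (h0N : (0 : X) ∈ N)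
    (μ : ℕ → X) (hμmem : ∀ i, μ i ∈ N) (hμ0 : μ 0 = 0)
    (hμinj : Function.Injective μ) (hμsurj : ∀ p ∈ N, ∃ i, μ i = p)
    (φ : ℕ → X → X)
    (hmaps : ∀ i, ∀ p ∈ N, ∃ j ≤ i, φ i p = μ j)
    (hretr : ∀ i j, j ≤ i → φ i (μ j) = μ j)
    (hcomm : ∀ i j, i ≤ j → ∀ p ∈ N, φ j (φ i p) = φ i p ∧ φ i (φ j p) = φ i p)
    (K : ℝ≥0) (hlip : ∀ i, LipschitzOnWith K (φ i) N)
    (m : ℕ) (A : Set X) (hA : A ⊆ N)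
    (hφm : ∀ t ∈ A, φ m t = μ m)
    (hnorm : (K : ℝ) * β * n < ‖μ m‖)
    (T : List ℕ) (hT : IsChainSeq φ μ T) (hhead : T.head? = some m)
    (a : ℕ) (hlast : T.getLast? = some a) (haA : μ a ∈ A) :
    ∀ p ∈ T, β * n < ‖μ p‖ := by
  -- every index in the chain is ≥ m
  have hge : ∀ p ∈ T, m ≤ p := by
    have hlt : T.Chain' (· < ·) := hT.imp (fun {a b} h => h.1)
    cases T with
    | nil => simp at hhead
    | cons x S =>
      simp only [List.head?_cons, Option.some_inj] at hhead
      subst hhead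
      have := (List.isChain_iff_pairwise.mp hlt)
      rcases List.pairwise_cons.mp this with ⟨hx, _⟩
      intro p hp
      rcases List.mem_cons.mp hp with h | h
      · exact h.ge
      · exact (hx p h).le
  -- backward induction: every point of the chain maps to μ m under φ m
  have key : ∀ S : List ℕ, S.Chain' (chainRel φ μ) → (∀ p ∈ S, m ≤ p) →
      (∀ l, S.getLast? = some l → φ m (μ l) = μ m) → ∀ p ∈ S, φ m (μ p) = μ m := by
    intro S
    induction S with
    | nil => simp
    | cons x S ih =>
      cases S with
      | nil =>
        intro _ _ hl p hp
        simp only [List.mem_singleton] at hp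
        subst hp
        exact hl p rfl
      | cons y S' =>
        intro hch hgeS hl p hp
        rcases List.isChain_cons_cons.mp hch with ⟨hxy, hch'⟩
        have hge' : ∀ q ∈ y :: S', m ≤ q := fun q hq => hgeS q (List.mem_cons_of_mem _ hq)
        have hl' : ∀ l, (y :: S').getLast? = some l → φ m (μ l) = μ m := by
          intro l h
          exact hl l (by rw [List.getLast?_cons_cons]; exact h)
        have hrec := ih hch' hge' hl'
        rcases List.mem_cons.mp hp with h | h
        · subst h
          obtain ⟨hlt, heq⟩ := hxy
          have hy : φ m (μ y) = μ m := hrec y List.mem_cons_self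
          have hm1 : m ≤ y - 1 := le_trans (hgeS p List.mem_cons_self)
            (Nat.le_sub_one_of_lt hlt)
          calc φ m (μ p) = φ m (φ (y - 1) (μ y)) := by rw [heq]
            _ = φ m (μ y) := (hcomm m (y - 1) hm1 (μ y) (hμmem y)).2
            _ = μ m := hy
        · exact hrec p h
  have hkey : ∀ p ∈ T, φ m (μ p) = μ m :=
    key T hT hge (fun l hl => by
      have : l = a := by rw [hlast] at hl; exact (Option.some_inj.mp hl).symm
      subst this
      exact hφm _ haA)
  -- Lipschitz estimate
  intro p hp
  have hmap : φ m (μ p) = μ m := hkey p hp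
  have hφ0 : φ m (0 : X) = 0 := by
    have := hretr m 0 (Nat.zero_le m)
    rwa [hμ0] at this
  have hdist : dist (φ m (μ p)) (φ m 0) ≤ K * dist (μ p) 0 :=
    (hlip m).dist_le_mul (μ p) (hμmem p) 0 h0N
  rw [hmap, hφ0, dist_zero_right, dist_zero_right] at hdist
  by_contra hcon
  push_neg at hcon
  have : (K : ℝ) * ‖μ p‖ ≤ (K : ℝ) * (β * n) :=
    mul_le_mul_of_nonneg_left hcon K.coe_nonneg
  nlinarith [hdist, hnorm]
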